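/- Let V ⊂ F^{n+1} be a linear subspace with 1 ≤ dim V ≤ n, let p_V be orthogonal projection onto V, and let [w] ∈ FP^n with w ∉ V^⊥. Then for every nonzero u ∈ V, d_g([w],[p_V(w)]) ≤ d_g([w],[u]), i.e., [p_V(w)] is a closest point to [w] in the projectivization of V with respect to the Fubini–Study geodesic distance d_g([x],[y]) = arccos(|⟨x,y⟩|/(‖x‖‖y‖)). -/

import Mathlib

open scoped InnerProductSpace

theorem stmt_1 {𝕜 : Type} [RCLike 𝕜] {n : ℕ}
    (V : Submodule 𝕜 (EuclideanSpace 𝕜 (Fin (n + 1))))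
    (hV1 : 1 ≤ Module.finrank 𝕜 V) (hV2 : Module.finrank 𝕜 V ≤ n)
    (dg : EuclideanSpace 𝕜 (Fin (n + 1)) → EuclideanSpace 𝕜 (Fin (n + 1)) → ℝ)
    (hdg : ∀ x y, dg x y = Real.arccos (‖⟪x, y⟫_𝕜‖ / (‖x‖ * ‖y‖)))
    (w : EuclideanSpace 𝕜 (Fin (n + 1))) (hw : w ∉ Vᗮ)
    (u : EuclideanSpace 𝕜 (Fin (n + 1))) (hu : u ∈ V) (hu0 : u ≠ 0) :
    dg w ((Submodule.orthogonalProjectionOnto V w : EuclideanSpace 𝕜 (Fin (n + 1)))) ≤ dg w u := by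
  have hw0 : w ≠ 0 := fun h => hw (h ▸ Vᗮ.zero_mem)
  set p : EuclideanSpace 𝕜 (Fin (n + 1)) := (Submodule.orthogonalProjectionOnto V w : EuclideanSpace 𝕜 (Fin (n + 1))) with hp
  have hpV : p ∈ V := (Submodule.orthogonalProjectionOnto V w).2
  have hp0 : p ≠ 0 := by
    intro h
    apply hw
    rw [← Submodule.orthogonalProjectionOnto_eq_zero_iff (K := V)]
    exact Subtype.coe_injective h
  have hsub : w - p ∈ Vᗮ := Submodule.sub_starProjection_mem_orthogonal (K := V) w
  have key : ∀ v : EuclideanSpace 𝕜 (Fin (n + 1)), v ∈ V → ⟪w, v⟫_𝕜 = ⟪p, v⟫_𝕜 := by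
    intro v hv
    have h0 : ⟪w - p, v⟫_𝕜 = 0 := Submodule.inner_left_of_mem_orthogonal hv hsub
    rw [inner_sub_left] at h0
    linear_combination h0
  have hinner_p : ‖⟪w, p⟫_𝕜‖ = ‖p‖ ^ 2 := by
    rw [key p hpV, inner_self_eq_norm_sq_to_K, norm_pow, RCLike.norm_ofReal, abs_norm]
  have hnw : (0:ℝ) < ‖w‖ := norm_pos_iff.mpr hw0
  have hnp : (0:ℝ) < ‖p‖ := norm_pos_iff.mpr hp0
  have hnu : (0:ℝ) < ‖u‖ := norm_pos_iff.mpr hu0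
  rw [hdg, hdg]
  have hle : ‖⟪w, u⟫_𝕜‖ / (‖w‖ * ‖u‖) ≤ ‖⟪w, p⟫_𝕜‖ / (‖w‖ * ‖p‖) := by
    rw [hinner_p, key u hu]
    have hCS : ‖⟪p, u⟫_𝕜‖ ≤ ‖p‖ * ‖u‖ := norm_inner_le_norm p u
    rw [div_le_div_iff₀ (by positivity) (by positivity)]
    calc ‖⟪p, u⟫_𝕜‖ * (‖w‖ * ‖p‖) ≤ (‖p‖ * ‖u‖) * (‖w‖ * ‖p‖) := by
          apply mul_le_mul_of_nonneg_right hCS; positivity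
      _ = ‖p‖ ^ 2 * (‖w‖ * ‖u‖) := by ring
  rw [Real.arccos, Real.arccos]
  have := Real.monotone_arcsin hle
  linarith
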